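/- Let K be a simplicial complex on [m], α = {α₁,…,α_r} a nondegenerate partition for K, and σ = {j₀,…,j_d} a maximal face of K with d = dim(K), where j_l ∈ α_{i_l}. Then under the k[u₁,…,u_r]-module structure on k(K) given by u_i ↦ Σ_{j∈α_i} v_j, the images of u_{i₀},…,u_{i_d} in k[u₁,…,u_r]/Ann(k(K)) are algebraically independent over k. -/

import Mathlib

open Finset

/-- An abstract simplicial complex on the vertex set `Fin m`. -/
structure SimplicialComplexOn (m : ℕ) where
  faces : Set (Finset (Fin m))
  down_closed : ∀ σ ∈ faces, ∀ τ ⊆ σ, τ ∈ faces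
  empty_mem : (∅ : Finset (Fin m)) ∈ faces
  singleton_mem : ∀ j : Fin m, {j} ∈ faces

/-- `dim K + 1`, i.e. the maximal cardinality of a face of `K`. -/
noncomputable def SimplicialComplexOn.dimAdd1 {m : ℕ} (K : SimplicialComplexOn m) : ℕ :=
  sSup {n : ℕ | ∃ σ ∈ K.faces, σ.card = n}

/-- A partition of `[m]`, encoded as a coloring `c : Fin m → Fin r`
(the block `α_i` being the fiber `c ⁻¹ {i}`), is nondegenerate for `K` if every
face of `K` meets each block in at most one vertex; equivalently, the two
vertices of any 1-simplex of `K` lie in different blocks. -/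
def IsNondegenerate {m r : ℕ} (K : SimplicialComplexOn m) (c : Fin m → Fin r) : Prop :=
  ∀ σ ∈ K.faces, ∀ j ∈ σ, ∀ j' ∈ σ, c j = c j' → j = j'

open MvPolynomial in
/-- The Stanley–Reisner ideal of `K`: the ideal of `k[v₁,…,v_m]` generated by
the squarefree monomials `v^τ = ∏_{j∈τ} v_j` over the non-faces `τ ∉ K`. -/
noncomputable def SRideal {m : ℕ} (K : SimplicialComplexOn m) (k : Type*) [Field k] :
    Ideal (MvPolynomial (Fin m) k) :=
  Ideal.span {p | ∃ τ : Finset (Fin m), τ ∉ K.faces ∧ p = ∏ j ∈ τ, (X j : MvPolynomial (Fin m) k)}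

/-- The Stanley–Reisner ring `k(K) = k[v₁,…,v_m]/I_K`. -/
abbrev SRring {m : ℕ} (K : SimplicialComplexOn m) (k : Type*) [Field k] :=
  MvPolynomial (Fin m) k ⧸ SRideal K k

open MvPolynomial in
/-- The `k`-algebra map `k[u₁,…,u_r] → k(K)`, `u_i ↦ Σ_{j ∈ α_i} v_j`,
inducing the `k[u₁,…,u_r]`-module structure on `k(K)` determined by the
partition encoded by the coloring `c`. -/
noncomputable def srAlgHom {m r : ℕ} (K : SimplicialComplexOn m) (k : Type*) [Field k]
    (c : Fin m → Fin r) : MvPolynomial (Fin r) k →ₐ[k] SRring K k :=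
  aeval (fun i : Fin r =>
    Ideal.Quotient.mk (SRideal K k)
      (∑ j ∈ Finset.univ.filter (fun j => c j = i), (X j : MvPolynomial (Fin m) k)))

set_option synthInstance.maxHeartbeats 1000000 in
set_option maxHeartbeats 2000000 in
open MvPolynomial in
/-- Let `σ = {j₀,…,j_d}` be a maximal face of `K` with `d = dim K`, where
`j_l` lies in the block `α_{i_l}` (so `i_l = c (j_l)`). Under the
`k[u₁,…,u_r]`-module structure `u_i ↦ Σ_{j∈α_i} v_j` on `k(K)` given by a
nondegenerate partition, the images of `u_{i₀},…,u_{i_d}` in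
`k[u₁,…,u_r]/Ann(k(K))` are algebraically independent over `k`. -/
theorem algebraicIndependent_in_quotient_by_annihilator {m r d : ℕ}
    (K : SimplicialComplexOn m) (k : Type*) [Field k]
    (c : Fin m → Fin r) (hc : Function.Surjective c) (hnd : IsNondegenerate K c)
    (σ : Finset (Fin m)) (hσ : σ ∈ K.faces)
    (hmax : ∀ τ ∈ K.faces, σ ⊆ τ → τ = σ)
    (hdim : K.dimAdd1 = d + 1) (hcard : σ.card = d + 1)
    (v : Fin (d + 1) → Fin m) (hv : Function.Injective v)
    (hvσ : Finset.image v Finset.univ = σ) :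
    AlgebraicIndependent k
      (fun l : Fin (d + 1) =>
        Ideal.Quotient.mk
          (@Module.annihilator (MvPolynomial (Fin r) k) (SRring K k) _ _
            (Module.compHom (SRring K k) (srAlgHom K k c).toRingHom))
          (X (c (v l)) : MvPolynomial (Fin r) k)) := by
  classical
  letI M : Module (MvPolynomial (Fin r) k) (SRring K k) :=
    Module.compHom (SRring K k) (srAlgHom K k c).toRingHom
  -- the substitution `v_j ↦ y_l` if `j = v l`, `v_j ↦ 0` otherwise
  set g : Fin m → MvPolynomial (Fin (d + 1)) k :=
    fun j => if h : ∃ l, v l = j then X h.choose else 0 with hg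
  have hgv : ∀ l : Fin (d + 1), g (v l) = X l := by
    intro l
    have h : ∃ l', v l' = v l := ⟨l, rfl⟩
    simp only [hg, dif_pos h]
    exact congrArg X (hv h.choose_spec)
  have hg0 : ∀ j : Fin m, j ∉ σ → g j = 0 := by
    intro j hj
    have : ¬ ∃ l, v l = j := by
      rintro ⟨l, rfl⟩
      exact hj (hvσ ▸ Finset.mem_image_of_mem v (Finset.mem_univ l))
    simp [hg, this]
  -- it kills the Stanley–Reisner ideal
  have hker : ∀ p ∈ SRideal K k, (aeval g) p = 0 := by
    have hle : SRideal K k ≤ RingHom.ker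
        (aeval g : MvPolynomial (Fin m) k →ₐ[k] MvPolynomial (Fin (d + 1)) k) := by
      rw [SRideal, Ideal.span_le]
      rintro q ⟨τ, hτ, rfl⟩
      simp only [SetLike.mem_coe, RingHom.mem_ker, map_prod, aeval_X]
      by_cases hsub : τ ⊆ σ
      · exact absurd (K.down_closed σ hσ τ hsub) hτ
      · obtain ⟨j, hjτ, hjσ⟩ := Finset.not_subset.mp hsub
        exact Finset.prod_eq_zero hjτ (hg0 j hjσ)
    exact fun p hp => hle hp
  -- the induced algebra map `k(K) → k[y₀,…,y_d]`
  set ρ : SRring K k →ₐ[k] MvPolynomial (Fin (d + 1)) k :=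
    Ideal.Quotient.liftₐ (SRideal K k) (aeval g) hker with hρ
  -- the annihilator is contained in the kernel of `srAlgHom`
  have hann : ∀ p ∈ Module.annihilator (MvPolynomial (Fin r) k) (SRring K k),
      (ρ.comp (srAlgHom K k c)) p = 0 := by
    intro p hp
    have h1 : p • (1 : SRring K k) = 0 := Module.mem_annihilator.mp hp 1
    have h2 : p • (1 : SRring K k) = (srAlgHom K k c) p * 1 := rfl
    have h3 : (srAlgHom K k c) p = 0 := by
      rw [h2, mul_one] at h1; exact h1
    simp [h3]
  set F : (MvPolynomial (Fin r) k ⧸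
      Module.annihilator (MvPolynomial (Fin r) k) (SRring K k)) →ₐ[k]
      MvPolynomial (Fin (d + 1)) k :=
    Ideal.Quotient.liftₐ _ (ρ.comp (srAlgHom K k c)) hann with hF
  refine AlgebraicIndependent.of_comp F ?_
  have key : (F ∘ fun l : Fin (d + 1) =>
      Ideal.Quotient.mk (Module.annihilator (MvPolynomial (Fin r) k) (SRring K k))
        (X (c (v l)) : MvPolynomial (Fin r) k)) = X := by
    funext l
    have hFmk : F (Ideal.Quotient.mk _ (X (c (v l)))) =
        ρ ((srAlgHom K k c) (X (c (v l)))) := rfl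
    rw [Function.comp_apply, hFmk]
    have hsr : (srAlgHom K k c) (X (c (v l))) =
        Ideal.Quotient.mk (SRideal K k)
          (∑ j ∈ Finset.univ.filter (fun j => c j = c (v l)),
            (X j : MvPolynomial (Fin m) k)) := by
      unfold srAlgHom; rw [aeval_X]
    rw [hsr]
    have hρmk : ρ (Ideal.Quotient.mk (SRideal K k)
        (∑ j ∈ Finset.univ.filter (fun j => c j = c (v l)),
          (X j : MvPolynomial (Fin m) k))) =
        (aeval g) (∑ j ∈ Finset.univ.filter (fun j => c j = c (v l)),
          (X j : MvPolynomial (Fin m) k)) := rfl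
    rw [hρmk, map_sum]
    have hvlσ : v l ∈ σ := hvσ ▸ Finset.mem_image_of_mem v (Finset.mem_univ l)
    have : ∑ j ∈ Finset.univ.filter (fun j => c j = c (v l)),
        (aeval g) (X j : MvPolynomial (Fin m) k) = X l := by
      rw [Finset.sum_eq_single (v l)]
      · rw [aeval_X, hgv l]
      · intro j hj hne
        simp only [Finset.mem_filter, Finset.mem_univ, true_and] at hj
        rw [aeval_X]
        by_cases hjσ : j ∈ σ
        · exact absurd (hnd σ hσ j hjσ (v l) hvlσ hj) hne
        · exact hg0 j hjσ
      · intro h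
        simp at h
    exact this
  rw [key]
  exact algebraicIndependent_X (Fin (d + 1)) k
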